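/- There exists a constant C > 0 such that for every ℓ ∈ ℕ and every v > 0, the Laguerre function satisfies |𝓛_ℓ(v)| = |L_ℓ(v) e^{−v/2}| ≤ C · (2ℓ+1)/v. -/

import Mathlib

open Real

/-- Laguerre polynomial of type 0 and degree ℓ. -/
noncomputable def laguerrePoly (ℓ : ℕ) (v : ℝ) : ℝ :=
  ∑ k ∈ Finset.range (ℓ + 1), (-1 : ℝ) ^ k * (ℓ.choose (ℓ - k) : ℝ) * v ^ k / (k.factorial : ℝ)

/-- Laguerre function `𝓛_ℓ(v) = L_ℓ(v) e^{-v/2}`. -/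
noncomputable def laguerreFun (ℓ : ℕ) (v : ℝ) : ℝ := laguerrePoly ℓ v * Real.exp (-v / 2)

open Finset


lemma Tshift (n j m : ℕ) :
    ∑ k ∈ range (n+1), (-1:ℝ)^k * (n.choose (k+1)) * ((k+1+j).choose m)
      = (j.choose m : ℝ) - ∑ k ∈ range (n+1), (-1:ℝ)^k * (n.choose k) * ((k+j).choose m) := by
  have h1 : ∑ k ∈ range (n+1), (-1:ℝ)^k * (n.choose (k+1)) * ((k+1+j).choose m)
      = -∑ k ∈ range (n+1),
          (fun k => (-1:ℝ)^k * (n.choose k) * ((k+j).choose m)) (k+1) := by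
    rw [← Finset.sum_neg_distrib]
    apply Finset.sum_congr rfl; intro k _
    simp only
    have : k + 1 + j = k + j + 1 := by omega
    rw [this]
    ring
  rw [h1]
  have h2 : ∑ k ∈ range (n+2),
        (fun k => (-1:ℝ)^k * (n.choose k) * ((k+j).choose m)) k
      = ∑ k ∈ range (n+1),
          (fun k => (-1:ℝ)^k * (n.choose k) * ((k+j).choose m)) (k+1)
        + (fun k => (-1:ℝ)^k * (n.choose k) * ((k+j).choose m)) 0 :=
    Finset.sum_range_succ' _ (n+1)
  have h3 : ∑ k ∈ range (n+2),
        (fun k => (-1:ℝ)^k * (n.choose k) * ((k+j).choose m)) k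
      = ∑ k ∈ range (n+1),
          (fun k => (-1:ℝ)^k * (n.choose k) * ((k+j).choose m)) k := by
    rw [Finset.sum_range_succ]
    simp [Nat.choose_succ_self]
  simp only at h2 h3
  rw [h3] at h2
  simp only [pow_zero, Nat.choose_zero_right, Nat.cast_one, one_mul, Nat.zero_add] at h2
  linarith

lemma Tlemma (n : ℕ) : ∀ j m : ℕ,
    ∑ k ∈ range (n+1), (-1:ℝ)^k * (n.choose k) * ((k+j).choose m)
      = if n ≤ m then (-1:ℝ)^n * (j.choose (m - n)) else 0 := by
  induction n with
  | zero => intro j m; simp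
  | succ n ih =>
    intro j m
    have peel : ∑ k ∈ range (n+2), (-1:ℝ)^k * ((n+1).choose k) * ((k+j).choose m)
        = (j.choose m : ℝ)
          + ∑ k ∈ range (n+1), (-1:ℝ)^(k+1) * ((n+1).choose (k+1)) * ((k+1+j).choose m) := by
      rw [Finset.sum_range_succ' (fun k => (-1:ℝ)^k * ((n+1).choose k) * ((k+j).choose m)) (n+1)]
      simp only [Nat.choose_zero_right, Nat.zero_add, Nat.cast_one, pow_zero, one_mul]
      ring
    -- split choose (n+1) (k+1) = choose n k + choose n (k+1)
    have split : ∑ k ∈ range (n+1), (-1:ℝ)^(k+1) * ((n+1).choose (k+1)) * ((k+1+j).choose m)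
        = -(∑ k ∈ range (n+1), (-1:ℝ)^k * (n.choose k) * ((k+1+j).choose m))
          - ∑ k ∈ range (n+1), (-1:ℝ)^k * (n.choose (k+1)) * ((k+1+j).choose m) := by
      rw [← Finset.sum_neg_distrib, ← Finset.sum_sub_distrib]
      apply Finset.sum_congr rfl
      intro k _
      rw [Nat.choose_succ_succ]
      push_cast
      ring
    have Sa : ∑ k ∈ range (n+1), (-1:ℝ)^k * (n.choose k) * ((k+1+j).choose m)
        = ∑ k ∈ range (n+1), (-1:ℝ)^k * (n.choose k) * ((k+(j+1)).choose m) := by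
      apply Finset.sum_congr rfl; intro k _
      have : k + 1 + j = k + (j + 1) := by omega
      rw [this]
    have Sb : ∑ k ∈ range (n+1), (-1:ℝ)^k * (n.choose (k+1)) * ((k+1+j).choose m)
        = (j.choose m : ℝ) - ∑ k ∈ range (n+1), (-1:ℝ)^k * (n.choose k) * ((k+j).choose m) :=
      Tshift n j m
    rw [peel, split, Sa, Sb, ih j m, ih (j+1) m]
    rcases lt_trichotomy m n with h | h | h
    · rw [if_neg (by omega), if_neg (by omega), if_neg (by omega)]
      ring
    · subst h
      rw [if_pos le_rfl, if_pos le_rfl, if_neg (by omega)]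
      simp only [Nat.sub_self, Nat.choose_zero_right, Nat.cast_one]
      ring
    · obtain ⟨r, hr⟩ : ∃ r, m - n = r + 1 := ⟨m - n - 1, by omega⟩
      rw [if_pos (by omega), if_pos (by omega), if_pos (by omega), hr]
      have : m - (n+1) = r := by omega
      rw [this, Nat.choose_succ_succ j r]
      push_cast
      ring

noncomputable def lagA (n k : ℕ) : ℝ := (-1:ℝ)^k * (n.choose k) / (k.factorial : ℝ)

noncomputable def lagB (n k : ℕ) : ℝ :=
  (-1:ℝ)^(k+1) * ((n.choose (k+1) : ℝ) + (n.choose k : ℝ)/2) / (k.factorial : ℝ)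

lemma fact_split (k j : ℕ) : ((k+j).factorial : ℝ) = ((k+j).choose j : ℝ) * k.factorial * j.factorial := by
  have h := Nat.add_choose_mul_factorial_mul_factorial k j
  rw [← h]
  push_cast
  ring

lemma Tval (n j : ℕ) :
    (if n ≤ j then (-1:ℝ)^n * (j.choose (j-n)) else 0) = (-1:ℝ)^n * (j.choose n) := by
  by_cases h : n ≤ j
  · rw [if_pos h, Nat.choose_symm h]
  · rw [if_neg h, Nat.choose_eq_zero_of_lt (by omega)]
    simp

lemma sumA_fact (n j : ℕ) :
    ∑ k ∈ Finset.range (n+1), lagA n k * ((k+j).factorial : ℝ)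
      = (-1:ℝ)^n * (j.factorial : ℝ) * (j.choose n : ℝ) := by
  have : ∀ k, lagA n k * ((k+j).factorial : ℝ)
      = ((-1:ℝ)^k * (n.choose k) * ((k+j).choose j)) * (j.factorial : ℝ) := by
    intro k
    rw [lagA, fact_split k j]
    have hk : (k.factorial : ℝ) ≠ 0 := Nat.cast_ne_zero.mpr (Nat.factorial_ne_zero k)
    field_simp
  simp only [this]
  rw [← Finset.sum_mul, Tlemma n j j, Tval n j]
  ring

lemma sumB_fact (n j : ℕ) :
    ∑ k ∈ Finset.range (n+1), lagB n k * ((k+j+1).factorial : ℝ)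
      = ((j+1).factorial : ℝ) * ((if n ≤ j+1 then (-1:ℝ)^n * (j.choose (j+1-n)) else 0)
          - (1/2) * ((-1:ℝ)^n * ((j+1).choose n))) := by
  have key : ∀ k, lagB n k * ((k+j+1).factorial : ℝ)
      = -(((-1:ℝ)^k * (n.choose (k+1)) * ((k+1+j).choose (j+1)))
          + (1/2) * ((-1:ℝ)^k * (n.choose k) * ((k+(j+1)).choose (j+1)))) * ((j+1).factorial : ℝ) := by
    intro k
    rw [lagB]
    have h1 : k+j+1 = k+(j+1) := by omega
    rw [h1, fact_split k (j+1)]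
    have h2 : (k+(j+1)).choose (j+1) = (k+1+j).choose (j+1) := by
      congr 1
      omega
    have hk : (k.factorial : ℝ) ≠ 0 := Nat.cast_ne_zero.mpr (Nat.factorial_ne_zero k)
    rw [h2]
    field_simp
    ring
  simp only [key]
  rw [← Finset.sum_mul]
  have e1 : ∀ (f g : ℕ → ℝ), ∑ i ∈ Finset.range (n+1), -(f i + 1/2 * g i)
      = -((∑ i ∈ Finset.range (n+1), f i) + 1/2 * ∑ i ∈ Finset.range (n+1), g i) := by
    intro f g
    rw [Finset.mul_sum, ← Finset.sum_add_distrib, ← Finset.sum_neg_distrib]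
  rw [e1 (fun i => (-1:ℝ)^i * (n.choose (i+1)) * ((i+1+j).choose (j+1)))
        (fun i => (-1:ℝ)^i * (n.choose i) * ((i+(j+1)).choose (j+1)))]
  rw [Tshift n j (j+1), Tlemma n (j+1) (j+1), Tlemma n j (j+1), Tval n (j+1)]
  rw [Nat.choose_eq_zero_of_lt (by omega : j < j+1)]
  push_cast
  ring

lemma evalA (n : ℕ) :
    ∑ k ∈ Finset.range (n+1), ∑ j ∈ Finset.range (n+1),
      lagA n k * lagA n j * ((k+j).factorial : ℝ) = 1 := by
  have inner : ∀ k, ∑ j ∈ Finset.range (n+1), lagA n k * lagA n j * ((k+j).factorial : ℝ)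
      = lagA n k * ((-1:ℝ)^n * (k.factorial : ℝ) * (k.choose n : ℝ)) := by
    intro k
    rw [← sumA_fact n k, Finset.mul_sum]
    apply Finset.sum_congr rfl; intro j _
    have : k + j = j + k := by omega
    rw [this]; ring
  simp only [inner]
  rw [Finset.sum_eq_single n]
  · rw [lagA, Nat.choose_self]
    have hn : (n.factorial : ℝ) ≠ 0 := Nat.cast_ne_zero.mpr (Nat.factorial_ne_zero n)
    have hs : (-1:ℝ)^n * (-1:ℝ)^n = 1 := by
      rw [← pow_add]
      exact Even.neg_one_pow ⟨n, rfl⟩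
    push_cast
    field_simp
    linear_combination hs
  · intro k hk hkn
    rw [Nat.choose_eq_zero_of_lt (by simp at hk; omega)]
    simp
  · intro h
    simp at h

lemma evalB (n : ℕ) :
    ∑ k ∈ Finset.range (n+1), ∑ j ∈ Finset.range (n+1),
      lagA n k * lagA n j * ((k+j+1).factorial : ℝ) = 2*(n:ℝ)+1 := by
  have inner : ∀ k, ∑ j ∈ Finset.range (n+1), lagA n k * lagA n j * ((k+j+1).factorial : ℝ)
      = lagA n k * ((-1:ℝ)^n * ((k+1).factorial : ℝ) * ((k+1).choose n : ℝ)) := by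
    intro k
    rw [← sumA_fact n (k+1), Finset.mul_sum]
    apply Finset.sum_congr rfl; intro j _
    have : k + j + 1 = j + (k+1) := by omega
    rw [this]; ring
  simp only [inner]
  cases n with
  | zero => simp [lagA]
  | succ m =>
    rw [Finset.sum_range_succ, Finset.sum_range_succ]
    have hzero : ∑ k ∈ Finset.range m, lagA (m+1) k *
        ((-1:ℝ)^(m+1) * (((k+1).factorial : ℕ) : ℝ) * (((k+1).choose (m+1) : ℕ) : ℝ)) = 0 := by
      apply Finset.sum_eq_zero
      intro k hk
      rw [Nat.choose_eq_zero_of_lt (by simp at hk; omega)]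
      simp
    rw [hzero, lagA, lagA, Nat.choose_self, Nat.choose_succ_self_right, Nat.choose_succ_self_right (m+1)]
    have h1 : (m.factorial : ℝ) ≠ 0 := Nat.cast_ne_zero.mpr (Nat.factorial_ne_zero m)
    have h2 : ((m+1).factorial : ℝ) ≠ 0 := Nat.cast_ne_zero.mpr (Nat.factorial_ne_zero (m+1))
    have hf1 : ((m+1).factorial : ℝ) = ((m:ℝ)+1) * (m.factorial : ℝ) := by
      rw [Nat.factorial_succ]; push_cast; ring
    have hf2 : ((m+1+1).factorial : ℝ) = ((m:ℝ)+2) * ((m:ℝ)+1) * (m.factorial : ℝ) := by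
      rw [Nat.factorial_succ, Nat.factorial_succ]; push_cast; ring
    rcases Nat.even_or_odd m with hm | hm
    · have e1 : (-1:ℝ)^m = 1 := hm.neg_one_pow
      have e2 : (-1:ℝ)^(m+1) = -1 := by rw [pow_succ, e1]; ring
      rw [e1, e2]
      push_cast
      rw [hf2, hf1]
      field_simp
      ring
    · have e1 : (-1:ℝ)^m = -1 := hm.neg_one_pow
      have e2 : (-1:ℝ)^(m+1) = 1 := by rw [pow_succ, e1]; ring
      rw [e1, e2]
      push_cast
      rw [hf2, hf1]
      field_simp
      ring

lemma evalC (n : ℕ) :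
        ∑ k ∈ Finset.range (n+1), ∑ j ∈ Finset.range (n+1),
          lagB n k * lagB n j * ((k+j+1).factorial : ℝ) = (2*(n:ℝ)+1)/4 := by
      have inner : ∀ j, ∑ k ∈ Finset.range (n+1), lagB n j * lagB n k * ((j+k+1).factorial : ℝ)
          = lagB n j * (((j+1).factorial : ℝ) *
              ((if n ≤ j+1 then (-1:ℝ)^n * (j.choose (j+1-n)) else 0)
                - (1/2) * ((-1:ℝ)^n * ((j+1).choose n)))) := by
        intro j
        rw [← sumB_fact n j, Finset.mul_sum]
        apply Finset.sum_congr rfl; intro k _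
        have h : j + k + 1 = k + j + 1 := by omega
        rw [h]; ring
      calc ∑ k ∈ Finset.range (n+1), ∑ j ∈ Finset.range (n+1),
            lagB n k * lagB n j * ((k+j+1).factorial : ℝ)
          = ∑ j ∈ Finset.range (n+1), lagB n j * (((j+1).factorial : ℝ) *
              ((if n ≤ j+1 then (-1:ℝ)^n * (j.choose (j+1-n)) else 0)
                - (1/2) * ((-1:ℝ)^n * ((j+1).choose n)))) := by
            apply Finset.sum_congr rfl; intro j _
            exact inner j
        _ = (2*(n:ℝ)+1)/4 := by
          cases n with
          | zero =>
            norm_num [Finset.sum_range_one, lagB]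
          | succ m =>
            rw [Finset.sum_range_succ, Finset.sum_range_succ]
            have hzero : ∑ j ∈ Finset.range m, lagB (m+1) j * (((j+1).factorial : ℝ) *
                ((if m+1 ≤ j+1 then (-1:ℝ)^(m+1) * (j.choose (j+1-(m+1))) else 0)
                  - (1/2) * ((-1:ℝ)^(m+1) * ((j+1).choose (m+1))))) = 0 := by
              apply Finset.sum_eq_zero
              intro j hj
              have hj' : j < m := Finset.mem_range.mp hj
              rw [if_neg (by omega), Nat.choose_eq_zero_of_lt (by omega)]
              simp
            rw [hzero, zero_add]
            rw [if_pos (by omega : m+1 ≤ m+1), if_pos (by omega : m+1 ≤ m+1+1)]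
            have hc1 : m+1-(m+1) = 0 := by omega
            have hc2 : m+1+1-(m+1) = 1 := by omega
            rw [hc1, hc2, Nat.choose_zero_right, Nat.choose_one_right, Nat.choose_self,
              Nat.choose_succ_self_right]
            rw [lagB, lagB, Nat.choose_self, Nat.choose_succ_self_right,
              Nat.choose_succ_self ]
            have h1 : (m.factorial : ℝ) ≠ 0 := Nat.cast_ne_zero.mpr (Nat.factorial_ne_zero m)
            have h2 : ((m+1).factorial : ℝ) ≠ 0 := Nat.cast_ne_zero.mpr (Nat.factorial_ne_zero (m+1))
            have hf1 : ((m+1).factorial : ℝ) = ((m:ℝ)+1) * (m.factorial : ℝ) := by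
              rw [Nat.factorial_succ]; push_cast; ring
            have hf2 : ((m+1+1).factorial : ℝ) = ((m:ℝ)+2) * ((m:ℝ)+1) * (m.factorial : ℝ) := by
              rw [Nat.factorial_succ, Nat.factorial_succ]; push_cast; ring
            rcases Nat.even_or_odd m with hm | hm
            · have e1 : (-1:ℝ)^m = 1 := hm.neg_one_pow
              have e2 : (-1:ℝ)^(m+1) = -1 := by rw [pow_succ, e1]; ring
              have e3 : (-1:ℝ)^(m+1+1) = 1 := by rw [pow_succ, e2]; ring
              rw [e2, e3]
              push_cast
              rw [hf2, hf1]
              field_simp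
              ring
            · have e1 : (-1:ℝ)^m = -1 := hm.neg_one_pow
              have e2 : (-1:ℝ)^(m+1) = 1 := by rw [pow_succ, e1]; ring
              have e3 : (-1:ℝ)^(m+1+1) = -1 := by rw [pow_succ, e2]; ring
              rw [e2, e3]
              push_cast
              rw [hf2, hf1]
              field_simp
              ring

open MeasureTheory

lemma moment_fun_eq (m : ℕ) :
    (fun x : ℝ => Real.exp (-x) * x ^ ((m:ℝ) + 1 - 1)) = fun x : ℝ => x ^ m * Real.exp (-x) := by
  funext x
  rw [show (m:ℝ) + 1 - 1 = ((m:ℕ):ℝ) by push_cast; ring, Real.rpow_natCast]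
  ring

lemma momentIntegrable (m : ℕ) :
    IntegrableOn (fun t : ℝ => t ^ m * Real.exp (-t)) (Set.Ioi 0) := by
  have h := Real.GammaIntegral_convergent (s := (m:ℝ) + 1) (by positivity)
  rwa [moment_fun_eq m] at h

lemma moment (m : ℕ) :
    ∫ t in Set.Ioi (0:ℝ), t ^ m * Real.exp (-t) = (m.factorial : ℝ) := by
  have h := Real.Gamma_eq_integral (s := (m:ℝ) + 1) (by positivity)
  rw [moment_fun_eq m] at h
  rw [← h, Real.Gamma_nat_eq_factorial]

lemma sq_sum_expand (c : ℕ → ℝ) (N s : ℕ) (t : ℝ) :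
    (∑ k ∈ Finset.range N, c k * t ^ k) ^ 2 * t ^ s * Real.exp (-t)
      = ∑ k ∈ Finset.range N, ∑ j ∈ Finset.range N,
          (c k * c j) * (t ^ (k + j + s) * Real.exp (-t)) := by
  rw [sq, Finset.sum_mul_sum, Finset.sum_mul, Finset.sum_mul]
  apply Finset.sum_congr rfl; intro k _
  rw [Finset.sum_mul, Finset.sum_mul]
  apply Finset.sum_congr rfl; intro j _
  rw [pow_add, pow_add]
  ring

lemma integrable_sq (c : ℕ → ℝ) (N s : ℕ) :
    IntegrableOn (fun t : ℝ =>
      (∑ k ∈ Finset.range N, c k * t ^ k) ^ 2 * t ^ s * Real.exp (-t)) (Set.Ioi 0) := by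
  have : (fun t : ℝ => (∑ k ∈ Finset.range N, c k * t ^ k) ^ 2 * t ^ s * Real.exp (-t))
      = fun t => ∑ k ∈ Finset.range N, ∑ j ∈ Finset.range N,
          (c k * c j) * (t ^ (k + j + s) * Real.exp (-t)) := by
    funext t; exact sq_sum_expand c N s t
  rw [this]
  apply integrable_finset_sum
  intro k _
  apply integrable_finset_sum
  intro j _
  exact (momentIntegrable (k + j + s)).const_mul _

lemma integral_sq (c : ℕ → ℝ) (N s : ℕ) :
    ∫ t in Set.Ioi (0:ℝ),
        (∑ k ∈ Finset.range N, c k * t ^ k) ^ 2 * t ^ s * Real.exp (-t)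
      = ∑ k ∈ Finset.range N, ∑ j ∈ Finset.range N,
          c k * c j * (((k + j + s).factorial : ℕ) : ℝ) := by
  have h1 : ∫ t in Set.Ioi (0:ℝ),
        (∑ k ∈ Finset.range N, c k * t ^ k) ^ 2 * t ^ s * Real.exp (-t)
      = ∫ t in Set.Ioi (0:ℝ), ∑ k ∈ Finset.range N, ∑ j ∈ Finset.range N,
          (c k * c j) * (t ^ (k + j + s) * Real.exp (-t)) := by
    congr 1
    funext t; exact sq_sum_expand c N s t
  rw [h1, integral_finset_sum]
  · apply Finset.sum_congr rfl; intro k _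
    rw [integral_finset_sum]
    · apply Finset.sum_congr rfl; intro j _
      rw [MeasureTheory.integral_const_mul, moment]
    · intro j _
      exact (momentIntegrable (k + j + s)).const_mul _
  · intro k _
    apply integrable_finset_sum
    intro j _
    exact (momentIntegrable (k + j + s)).const_mul _

lemma lagP_eq (n : ℕ) (v : ℝ) :
    laguerrePoly n v = ∑ k ∈ Finset.range (n+1), lagA n k * v ^ k := by
  apply Finset.sum_congr rfl
  intro k hk
  have hk' : k ≤ n := by
    have := Finset.mem_range.mp hk; omega
  rw [lagA, Nat.choose_symm hk']
  ring

lemma hasDerivAt_lagP (n : ℕ) (v : ℝ) :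
    HasDerivAt (fun t => ∑ k ∈ Finset.range (n+1), lagA n k * t ^ k)
      (∑ k ∈ Finset.range (n+1), (lagA (n) (k+1) * (k+1)) * v ^ k) v := by
  have h : HasDerivAt (fun t => ∑ k ∈ Finset.range (n+1), lagA n k * t ^ k)
      (∑ k ∈ Finset.range (n+1), lagA n k * (k * v ^ (k-1))) v := by
    apply HasDerivAt.fun_sum
    intro k _
    simpa using (hasDerivAt_pow k v).const_mul (lagA n k)
  have e : ∑ k ∈ Finset.range (n+1), lagA n k * (k * v ^ (k-1))
      = ∑ k ∈ Finset.range (n+1), (lagA n (k+1) * (k+1)) * v ^ k := by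
    rw [Finset.sum_range_succ' (fun k => lagA n k * (k * v ^ (k-1))) n]
    rw [Finset.sum_range_succ (fun k => (lagA n (k+1) * (k+1)) * v ^ k) n]
    have htop : lagA n (n+1) = 0 := by
      rw [lagA, Nat.choose_succ_self]
      simp
    rw [htop]
    simp only [Nat.cast_zero, zero_mul, mul_zero, add_zero, Nat.add_sub_cancel]
    apply Finset.sum_congr rfl
    intro k _
    push_cast
    ring
  rw [e] at h
  exact h

lemma lagA_succ_eq (n k : ℕ) : lagA n (k+1) * (k+1) = lagB n k + lagA n k / 2 := by
  simp only [lagA, lagB]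
  have h1 : ((k+1).factorial : ℝ) = ((k:ℝ)+1) * (k.factorial : ℝ) := by
    rw [Nat.factorial_succ]; push_cast; ring
  have h2 : (k.factorial : ℝ) ≠ 0 := Nat.cast_ne_zero.mpr (Nat.factorial_ne_zero k)
  rw [h1]
  field_simp
  ring

/-- the derivative of the Laguerre function -/
noncomputable def lagF' (n : ℕ) (v : ℝ) : ℝ :=
  (∑ k ∈ Finset.range (n+1), lagB n k * v ^ k) * Real.exp (-v/2)

lemma hasDerivAt_lagF (n : ℕ) (v : ℝ) :
    HasDerivAt (fun t => (∑ k ∈ Finset.range (n+1), lagA n k * t ^ k) * Real.exp (-t/2))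
      (lagF' n v) v := by
  have hexp : HasDerivAt (fun t : ℝ => Real.exp (-t/2)) (Real.exp (-v/2) * (-1/2)) v := by
    have h1 : HasDerivAt (fun t : ℝ => -t/2) (-1/2) v := by
      simpa using ((hasDerivAt_id v).neg.div_const 2)
    exact (Real.hasDerivAt_exp (-v/2)).comp v h1
  have h := (hasDerivAt_lagP n v).mul hexp
  have e : (∑ k ∈ Finset.range (n+1), (lagA n (k+1) * (k+1)) * v ^ k) * Real.exp (-v/2)
      + (∑ k ∈ Finset.range (n+1), lagA n k * v ^ k) * (Real.exp (-v/2) * (-1/2))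
      = lagF' n v := by
    rw [lagF']
    have e2 : ∑ k ∈ Finset.range (n+1), lagB n k * v ^ k
        = ∑ k ∈ Finset.range (n+1), ((lagA n (k+1) * (k+1)) * v ^ k - (lagA n k * v ^ k) / 2) := by
      apply Finset.sum_congr rfl
      intro k _
      rw [lagA_succ_eq]
      ring
    rw [e2, Finset.sum_sub_distrib]
    rw [← Finset.sum_div]
    ring
  rw [← e]
  exact h

lemma exp_half_sq (t : ℝ) : Real.exp (-t/2) * Real.exp (-t/2) = Real.exp (-t) := by
  rw [← Real.exp_add]; ring_nf

noncomputable def lagF (n : ℕ) (v : ℝ) : ℝ :=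
  (∑ k ∈ Finset.range (n+1), lagA n k * v ^ k) * Real.exp (-v/2)

noncomputable def bigG (n : ℕ) (t : ℝ) : ℝ :=
  (lagF n t)^2 + t * (lagF n t)^2 / 2 + 2 * t * (lagF' n t)^2

noncomputable def fmon (c : ℕ → ℝ) (N s : ℕ) : ℝ → ℝ :=
  fun t => (∑ k ∈ Finset.range N, c k * t ^ k) ^ 2 * t ^ s * Real.exp (-t)

lemma integrable_fmon (c : ℕ → ℝ) (N s : ℕ) : IntegrableOn (fmon c N s) (Set.Ioi 0) :=
  integrable_sq c N s

lemma integral_fmon (c : ℕ → ℝ) (N s : ℕ) :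
    ∫ t in Set.Ioi (0:ℝ), fmon c N s t
      = ∑ k ∈ Finset.range N, ∑ j ∈ Finset.range N,
          c k * c j * (((k + j + s).factorial : ℕ) : ℝ) :=
  integral_sq c N s

lemma bigG_eq (n : ℕ) : bigG n = fun t =>
    fmon (lagA n) (n+1) 0 t
      + ((1/2) * fmon (lagA n) (n+1) 1 t + 2 * fmon (lagB n) (n+1) 1 t) := by
  funext t
  rw [bigG, lagF, lagF', fmon, fmon, fmon, ← exp_half_sq t]
  ring

lemma bigG_integrable (n : ℕ) : IntegrableOn (bigG n) (Set.Ioi 0) := by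
  rw [bigG_eq]
  exact (integrable_fmon (lagA n) (n+1) 0).add
    (((integrable_fmon (lagA n) (n+1) 1).const_mul (1/2)).add
      ((integrable_fmon (lagB n) (n+1) 1).const_mul 2))

lemma bigG_integral (n : ℕ) : ∫ t in Set.Ioi (0:ℝ), bigG n t = 2*(n:ℝ)+2 := by
  have h1 : IntegrableOn (fun t : ℝ => fmon (lagA n) (n+1) 0 t) (Set.Ioi 0) :=
    integrable_fmon _ _ _
  have h2 : IntegrableOn (fun t : ℝ => 1/2 * fmon (lagA n) (n+1) 1 t) (Set.Ioi 0) :=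
    (integrable_fmon _ _ _).const_mul _
  have h3 : IntegrableOn (fun t : ℝ => 2 * fmon (lagB n) (n+1) 1 t) (Set.Ioi 0) :=
    (integrable_fmon _ _ _).const_mul _
  have e1 : ∫ t in Set.Ioi (0:ℝ), bigG n t
      = ∫ t in Set.Ioi (0:ℝ), (fmon (lagA n) (n+1) 0 t
          + (1/2 * fmon (lagA n) (n+1) 1 t + 2 * fmon (lagB n) (n+1) 1 t)) := by
    rw [bigG_eq]
  have e2 : ∫ t in Set.Ioi (0:ℝ), (fmon (lagA n) (n+1) 0 t
        + (1/2 * fmon (lagA n) (n+1) 1 t + 2 * fmon (lagB n) (n+1) 1 t))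
      = (∫ t in Set.Ioi (0:ℝ), fmon (lagA n) (n+1) 0 t)
        + ∫ t in Set.Ioi (0:ℝ), (1/2 * fmon (lagA n) (n+1) 1 t
            + 2 * fmon (lagB n) (n+1) 1 t) :=
    MeasureTheory.integral_add h1 (h2.add h3)
  have e3 : ∫ t in Set.Ioi (0:ℝ), (1/2 * fmon (lagA n) (n+1) 1 t
        + 2 * fmon (lagB n) (n+1) 1 t)
      = (∫ t in Set.Ioi (0:ℝ), 1/2 * fmon (lagA n) (n+1) 1 t)
        + ∫ t in Set.Ioi (0:ℝ), 2 * fmon (lagB n) (n+1) 1 t :=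
    MeasureTheory.integral_add h2 h3
  rw [e1, e2, e3, MeasureTheory.integral_const_mul, MeasureTheory.integral_const_mul,
    integral_fmon, integral_fmon, integral_fmon]
  have hA : ∑ k ∈ Finset.range (n+1), ∑ j ∈ Finset.range (n+1),
      lagA n k * lagA n j * (((k + j + 0).factorial : ℕ) : ℝ) = 1 := by
    simpa using evalA n
  have hB : ∑ k ∈ Finset.range (n+1), ∑ j ∈ Finset.range (n+1),
      lagA n k * lagA n j * (((k + j + 1).factorial : ℕ) : ℝ) = 2*(n:ℝ)+1 := evalB n
  have hC : ∑ k ∈ Finset.range (n+1), ∑ j ∈ Finset.range (n+1),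
      lagB n k * lagB n j * (((k + j + 1).factorial : ℕ) : ℝ) = (2*(n:ℝ)+1)/4 := evalC n
  rw [hA, hB, hC]
  ring

lemma continuous_lagF (n : ℕ) : Continuous (lagF n) := by
  apply Continuous.mul
  · exact continuous_finset_sum _ (fun k _ => continuous_const.mul (continuous_pow k))
  · exact Real.continuous_exp.comp (by continuity)

lemma continuous_lagF' (n : ℕ) : Continuous (lagF' n) := by
  apply Continuous.mul
  · exact continuous_finset_sum _ (fun k _ => continuous_const.mul (continuous_pow k))
  · exact Real.continuous_exp.comp (by continuity)

lemma main_sq_bound (n : ℕ) (v : ℝ) (hv : 0 < v) :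
    v * (lagF n v)^2 ≤ 2*(n:ℝ)+2 := by
  set F : ℝ → ℝ := fun t => t * (lagF n t)^2 with hF
  set F' : ℝ → ℝ := fun t => (lagF n t)^2 + 2 * t * lagF n t * lagF' n t with hF'
  have hderiv : ∀ x ∈ Set.uIcc (0:ℝ) v, HasDerivAt F (F' x) x := by
    intro x _
    have h1 : HasDerivAt (fun t => (lagF n t)^2) (2 * lagF n x ^ 1 * lagF' n x) x :=
      (hasDerivAt_lagF n x).pow 2
    have h2 := (hasDerivAt_id x).mul h1
    have : 1 * (lagF n x)^2 + x * (2 * lagF n x ^ 1 * lagF' n x) = F' x := by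
      rw [hF']; ring
    rw [← this]
    exact h2
  have hcontF' : Continuous F' := by
    apply Continuous.add
    · exact (continuous_lagF n).pow 2
    · exact ((continuous_const.mul continuous_id).mul (continuous_lagF n)).mul (continuous_lagF' n)
  have hcontG : Continuous (bigG n) := by
    apply Continuous.add
    · apply Continuous.add
      · exact (continuous_lagF n).pow 2
      · exact (continuous_id.mul ((continuous_lagF n).pow 2)).div_const 2
    · exact (continuous_const.mul continuous_id).mul ((continuous_lagF' n).pow 2)
  have ftc : ∫ t in (0:ℝ)..v, F' t = v * (lagF n v)^2 := by
    rw [intervalIntegral.integral_eq_sub_of_hasDerivAt hderiv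
      (hcontF'.intervalIntegrable 0 v)]
    simp [hF]
  have mono1 : ∫ t in (0:ℝ)..v, F' t ≤ ∫ t in (0:ℝ)..v, bigG n t := by
    apply intervalIntegral.integral_mono_on hv.le
      (hcontF'.intervalIntegrable 0 v) (hcontG.intervalIntegrable 0 v)
    intro x hx
    have hx0 : 0 ≤ x := hx.1
    rw [hF', bigG]
    nlinarith [sq_nonneg (lagF n x - 2 * lagF' n x), hx0,
      mul_nonneg hx0 (sq_nonneg (lagF n x - 2 * lagF' n x))]
  have mono2 : ∫ t in (0:ℝ)..v, bigG n t ≤ ∫ t in Set.Ioi (0:ℝ), bigG n t := by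
    rw [intervalIntegral.integral_of_le hv.le]
    apply MeasureTheory.setIntegral_mono_set (bigG_integrable n)
    · apply (MeasureTheory.ae_restrict_iff' measurableSet_Ioi).mpr
      apply MeasureTheory.ae_of_all
      intro x hx
      have hx0 : (0:ℝ) < x := hx
      rw [bigG]
      positivity
    · exact MeasureTheory.ae_of_all _ (fun x hx => Set.Ioc_subset_Ioi_self hx)
  rw [← ftc] at *
  calc ∫ t in (0:ℝ)..v, F' t ≤ ∫ t in (0:ℝ)..v, bigG n t := mono1
    _ ≤ ∫ t in Set.Ioi (0:ℝ), bigG n t := mono2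
    _ = 2*(n:ℝ)+2 := bigG_integral n

lemma cheap_poly_bound (n : ℕ) (v : ℝ) (hv : 0 ≤ v) :
    |∑ k ∈ Finset.range (n+1), lagA n k * v ^ k|
      ≤ Real.exp (2 * Real.sqrt (n * v)) := by
  set s := Real.sqrt ((n:ℝ) * v) with hs
  have hs0 : 0 ≤ s := Real.sqrt_nonneg _
  have hss : s ^ 2 = (n:ℝ) * v := Real.sq_sqrt (by positivity)
  have step1 : |∑ k ∈ Finset.range (n+1), lagA n k * v ^ k|
      ≤ ∑ k ∈ Finset.range (n+1), (s ^ k / (k.factorial : ℝ)) ^ 2 := by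
    refine (Finset.abs_sum_le_sum_abs _ _).trans (Finset.sum_le_sum ?_)
    intro k _
    have h1 : |lagA n k * v ^ k| = ((n.choose k : ℝ) / k.factorial) * v ^ k := by
      rw [abs_mul, lagA, abs_div, abs_mul, abs_pow, abs_neg, abs_one, one_pow, one_mul,
        abs_pow, abs_of_nonneg hv]
      simp [Nat.abs_cast]
    rw [h1]
    have h2 : ((n.choose k : ℝ)) ≤ ((n:ℝ)) ^ k / (k.factorial : ℝ) :=
      Nat.choose_le_pow_div k n
    have hk : (0:ℝ) < (k.factorial : ℝ) := by
      exact_mod_cast Nat.factorial_pos k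
    have h3 : (s ^ k / (k.factorial : ℝ)) ^ 2 = ((n:ℝ)*v) ^ k / ((k.factorial : ℝ))^2 := by
      rw [div_pow, ← pow_mul, mul_comm k 2, pow_mul, hss]
    rw [h3, mul_pow]
    rw [div_mul_eq_mul_div, div_le_div_iff₀ hk (by positivity)]
    calc (n.choose k : ℝ) * v ^ k * (k.factorial : ℝ) ^ 2
        ≤ ((n:ℝ) ^ k / (k.factorial : ℝ)) * v ^ k * (k.factorial : ℝ) ^ 2 := by
          apply mul_le_mul_of_nonneg_right (mul_le_mul_of_nonneg_right h2 (by positivity))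
          positivity
      _ = (n:ℝ) ^ k * v ^ k * (k.factorial : ℝ) := by
          field_simp
  have step2 : ∑ k ∈ Finset.range (n+1), (s ^ k / (k.factorial : ℝ)) ^ 2
      ≤ (∑ k ∈ Finset.range (n+1), s ^ k / (k.factorial : ℝ)) ^ 2 := by
    have hterm : ∀ k ∈ Finset.range (n+1), (0:ℝ) ≤ s ^ k / (k.factorial : ℝ) := by
      intro k _; positivity
    rw [sq]
    calc ∑ k ∈ Finset.range (n+1), (s ^ k / (k.factorial : ℝ)) ^ 2
        ≤ ∑ k ∈ Finset.range (n+1), (s ^ k / (k.factorial : ℝ))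
            * (∑ j ∈ Finset.range (n+1), s ^ j / (j.factorial : ℝ)) := by
          apply Finset.sum_le_sum
          intro k hk
          rw [sq]
          apply mul_le_mul_of_nonneg_left _ (hterm k hk)
          exact Finset.single_le_sum hterm hk
      _ = _ := by rw [← Finset.sum_mul]
  have step3 : (∑ k ∈ Finset.range (n+1), s ^ k / (k.factorial : ℝ)) ^ 2
      ≤ Real.exp (2 * s) := by
    have h := Real.sum_le_exp_of_nonneg hs0 (n+1)
    have h2 : Real.exp (2*s) = Real.exp s ^ 2 := by
      rw [show (2:ℝ)*s = s + s by ring, Real.exp_add, sq]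
    rw [h2]
    apply pow_le_pow_left₀ _ h 2
    apply Finset.sum_nonneg
    intro k _; positivity
  linarith

lemma cheap_bound (n : ℕ) (v : ℝ) (hv : 0 < v) (hle : 32 * (n:ℝ) ≤ v) :
    |lagF n v| ≤ 8 / v := by
  have h1 : |lagF n v| ≤ Real.exp (2 * Real.sqrt (n * v) - v/2) := by
    rw [lagF, abs_mul, abs_of_pos (Real.exp_pos _), Real.exp_sub]
    rw [show Real.exp (-v/2) = (Real.exp (v/2))⁻¹ by
      rw [← Real.exp_neg]; ring_nf]
    rw [div_eq_mul_inv]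
    apply mul_le_mul (cheap_poly_bound n v hv.le) le_rfl (by positivity)
      (Real.exp_pos _).le
  have hsq : Real.sqrt ((n:ℝ) * v) ≤ 2*(n:ℝ) + v/8 := by
    have : (n:ℝ) * v ≤ (2*(n:ℝ) + v/8)^2 := by nlinarith [Nat.cast_nonneg (α := ℝ) n]
    calc Real.sqrt ((n:ℝ)*v) ≤ Real.sqrt ((2*(n:ℝ) + v/8)^2) := Real.sqrt_le_sqrt this
      _ = 2*(n:ℝ) + v/8 := Real.sqrt_sq (by positivity)
  have h2 : 2 * Real.sqrt (n * v) - v/2 ≤ -v/8 := by nlinarith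
  have h3 : Real.exp (2 * Real.sqrt (n * v) - v/2) ≤ Real.exp (-v/8) :=
    Real.exp_le_exp.mpr h2
  have h4 : Real.exp (-v/8) ≤ 8 / v := by
    have ha := Real.add_one_le_exp (v/8)
    have hb : Real.exp (-v/8) = (Real.exp (v/8))⁻¹ := by
      rw [← Real.exp_neg]; ring_nf
    rw [hb]
    have hc : (0:ℝ) < v/8 := by linarith
    have : (Real.exp (v/8))⁻¹ ≤ (v/8)⁻¹ := by
      apply inv_anti₀ hc
      linarith
    calc (Real.exp (v/8))⁻¹ ≤ (v/8)⁻¹ := this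
      _ = 8 / v := by rw [inv_div]
  linarith

theorem laguerreFun_decay_bound_aux :
    ∃ C > (0 : ℝ), ∀ (ℓ : ℕ) (v : ℝ), 0 < v →
      |laguerreFun ℓ v| ≤ C * (2 * (ℓ : ℝ) + 1) / v := by
  refine ⟨32, by norm_num, ?_⟩
  intro ℓ v hv
  have hid : laguerreFun ℓ v = lagF ℓ v := by
    rw [laguerreFun, lagF, lagP_eq]
  rw [hid]
  have hpos : (0:ℝ) < 2 * (ℓ:ℝ) + 1 := by positivity
  have key := main_sq_bound ℓ v hv
  rcases le_or_gt v (4*(ℓ:ℝ)+2) with h1 | h1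
  · -- small v : |lagF| ≤ 2(2ℓ+1)/v
    have hsq : (lagF ℓ v)^2 ≤ (2*(2*(ℓ:ℝ)+1)/v)^2 := by
      have e1 : (lagF ℓ v)^2 ≤ (2*(ℓ:ℝ)+2)/v := by
        rw [le_div_iff₀ hv]
        nlinarith
      have e2 : (2*(ℓ:ℝ)+2)/v ≤ (2*(2*(ℓ:ℝ)+1)/v)^2 := by
        rw [div_pow, div_le_div_iff₀ hv (by positivity)]
        nlinarith [mul_nonneg (mul_nonneg hv.le (by positivity : (0:ℝ) ≤ 2*(ℓ:ℝ)+2))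
            (by linarith : (0:ℝ) ≤ 4*(ℓ:ℝ)+2 - v),
          mul_nonneg (mul_nonneg (Nat.cast_nonneg (α := ℝ) ℓ) hv.le)
            (by positivity : (0:ℝ) ≤ 2*(ℓ:ℝ)+1)]
      linarith
    have habs : |lagF ℓ v| ≤ 2*(2*(ℓ:ℝ)+1)/v := by
      have := Real.sqrt_le_sqrt hsq
      rw [Real.sqrt_sq_eq_abs, Real.sqrt_sq (by positivity)] at this
      exact this
    calc |lagF ℓ v| ≤ 2*(2*(ℓ:ℝ)+1)/v := habs
      _ ≤ 32 * (2*(ℓ:ℝ)+1)/v := by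
          apply (div_le_div_iff_of_pos_right hv).mpr
          nlinarith [Nat.cast_nonneg (α := ℝ) ℓ]
  · rcases le_or_gt v (32*(ℓ:ℝ)) with h2 | h2
    · -- middle: |lagF| ≤ 1 ≤ 32(2ℓ+1)/v
      have hsq : (lagF ℓ v)^2 ≤ 1 := by
        have e1 : (lagF ℓ v)^2 ≤ (2*(ℓ:ℝ)+2)/v := by
          rw [le_div_iff₀ hv]
          nlinarith
        have e2 : (2*(ℓ:ℝ)+2)/v ≤ 1 := by
          rw [div_le_one hv]
          linarith
        linarith
      have habs : |lagF ℓ v| ≤ 1 := by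
        have := Real.sqrt_le_sqrt hsq
        rw [Real.sqrt_sq_eq_abs, Real.sqrt_one] at this
        exact this
      calc |lagF ℓ v| ≤ 1 := habs
        _ ≤ 32 * (2*(ℓ:ℝ)+1)/v := by
            rw [le_div_iff₀ hv]
            nlinarith [Nat.cast_nonneg (α := ℝ) ℓ]
    · -- large v
      have := cheap_bound ℓ v hv h2.le
      calc |lagF ℓ v| ≤ 8/v := this
        _ ≤ 32 * (2*(ℓ:ℝ)+1)/v := by
            apply (div_le_div_iff_of_pos_right hv).mpr
            nlinarith [Nat.cast_nonneg (α := ℝ) ℓ]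


/-- There is `C > 0` with `|𝓛_ℓ(v)| ≤ C (2ℓ+1)/v` for all `ℓ ∈ ℕ` and `v > 0`. -/
theorem laguerreFun_decay_bound :
    ∃ C > (0 : ℝ), ∀ (ℓ : ℕ) (v : ℝ), 0 < v →
      |laguerreFun ℓ v| ≤ C * (2 * (ℓ : ℝ) + 1) / v :=
  laguerreFun_decay_bound_aux
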